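/- Let d ≥ 1, let Q = [−1/2, 1/2]^d ⊂ ℝ^d be the closed unit cube, and let v : ℝ^d → ℝ be continuous on Q with v ≥ 0 on Q. Let y_1, …, y_n be finitely many distinct points in the open cube (−1/2, 1/2)^d such that v(x) = 0 for x ∈ Q if and only if x ∈ {y_1, …, y_n}, and assume there are reals α_j > 0 and c_j > 0 such that for each j, v(x)/‖x − y_j‖^{α_j} → c_j as x → y_j. Then there exist constants K > 0 and C > 0 such that for every t ≥ 1, ∫_Q exp(−t v(z)) dz ≤ exp(−tK) + C ∑_{j=1}^n t^{−d/α_j}. -/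

import Mathlib

open Filter MeasureTheory

lemma exists_exp_rpow_bound (k : ℕ) {b p : ℝ} (hb : 0 < b) (hp : 0 < p) :
    ∃ A : ℝ, 0 ≤ A ∧ ∀ r : ℝ, 0 ≤ r →
      Real.exp (-(b * r ^ p)) ≤ A * (1 + r) ^ (-(k : ℝ)) := by
  set φ : ℝ → ℝ := fun r => (1 + r) ^ k * Real.exp (-(b * r ^ p)) with hφ
  have hφcont : Continuous φ := by
    apply Continuous.mul
    · exact (continuous_const.add continuous_id).pow k
    · exact Real.continuous_exp.comp
        ((continuous_const.mul (continuous_id.rpow_const fun x => Or.inr hp.le)).neg)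
  have htend : Tendsto φ atTop (nhds 0) := by
    have h0 : Tendsto (fun u : ℝ => (2:ℝ) ^ k * (u ^ ((k : ℝ) / p) * Real.exp (-b * u)))
        atTop (nhds ((2:ℝ) ^ k * 0)) :=
      (tendsto_rpow_mul_exp_neg_mul_atTop_nhds_zero ((k : ℝ) / p) b hb).const_mul _
    rw [mul_zero] at h0
    have h1 := h0.comp (tendsto_rpow_atTop hp)
    refine tendsto_of_tendsto_of_tendsto_of_le_of_le' tendsto_const_nhds h1 ?_ ?_
    · filter_upwards [eventually_ge_atTop (0 : ℝ)] with r hr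
      have : (0:ℝ) ≤ 1 + r := by linarith
      positivity
    · filter_upwards [eventually_ge_atTop (1 : ℝ)] with r hr
      have hr0 : (0:ℝ) ≤ r := by linarith
      have hpow : (1 + r) ^ k ≤ (2:ℝ) ^ k * r ^ k := by
        rw [← mul_pow]
        exact pow_le_pow_left₀ (by linarith) (by linarith) k
      have hrk : (r ^ p) ^ ((k : ℝ) / p) = r ^ k := by
        rw [← Real.rpow_mul hr0, mul_div_cancel₀ _ hp.ne', Real.rpow_natCast]
      have hexp : (0:ℝ) < Real.exp (-(b * r ^ p)) := Real.exp_pos _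
      calc φ r = (1 + r) ^ k * Real.exp (-(b * r ^ p)) := rfl
        _ ≤ (2:ℝ) ^ k * r ^ k * Real.exp (-(b * r ^ p)) :=
            mul_le_mul_of_nonneg_right hpow hexp.le
        _ = (2:ℝ) ^ k * ((r ^ p) ^ ((k : ℝ) / p) * Real.exp (-b * (r ^ p))) := by
            rw [hrk]; ring_nf
  obtain ⟨R, hR⟩ := eventually_atTop.mp (htend.eventually_lt_const zero_lt_one)
  obtain ⟨M, hM⟩ := (isCompact_Icc (a := (0:ℝ)) (b := max R 0)).exists_bound_of_continuousOn
    hφcont.continuousOn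
  refine ⟨max M 1, le_trans zero_le_one (le_max_right _ _), fun r hr => ?_⟩
  have hφr : φ r ≤ max M 1 := by
    rcases le_or_gt r (max R 0) with h | h
    · have := hM r ⟨hr, h⟩
      calc φ r ≤ ‖φ r‖ := le_abs_self _
        _ ≤ M := this
        _ ≤ max M 1 := le_max_left _ _
    · exact (hR r (le_of_lt (lt_of_le_of_lt (le_max_left R 0) h))).le.trans (le_max_right _ _)
  have h1r : (0:ℝ) < 1 + r := by linarith
  have hpk : (0:ℝ) < (1 + r) ^ k := pow_pos h1r k
  have hrw : (1 + r) ^ (-(k : ℝ)) = ((1 + r) ^ k)⁻¹ := by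
    rw [Real.rpow_neg h1r.le, Real.rpow_natCast]
  rw [hrw]
  rw [show Real.exp (-(b * r ^ p)) = φ r * ((1 + r) ^ k)⁻¹ by
    rw [hφ]; field_simp]
  exact mul_le_mul_of_nonneg_right hφr (inv_nonneg.mpr hpk.le)


lemma integrable_exp_neg_mul_rpow_norm {d : ℕ} {b p : ℝ} (hb : 0 < b) (hp : 0 < p) :
    Integrable (fun x : EuclideanSpace ℝ (Fin d) => Real.exp (-(b * ‖x‖ ^ p))) := by
  obtain ⟨A, hA0, hA⟩ := exists_exp_rpow_bound (d + 1) hb hp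
  have hfin : (Module.finrank ℝ (EuclideanSpace ℝ (Fin d)) : ℝ) < ((d + 1 : ℕ) : ℝ) := by
    rw [finrank_euclideanSpace_fin]; push_cast; linarith
  have hint : Integrable
      (fun x : EuclideanSpace ℝ (Fin d) => A * (1 + ‖x‖) ^ (-((d + 1 : ℕ) : ℝ))) :=
    (integrable_one_add_norm hfin).const_mul A
  refine hint.mono' ?_ ?_
  · exact (Real.continuous_exp.comp
      ((continuous_const.mul (continuous_norm.rpow_const fun x => Or.inr hp.le)).neg)).aestronglyMeasurable
  · refine Filter.Eventually.of_forall fun x => ?_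
    rw [Real.norm_eq_abs, abs_of_pos (Real.exp_pos _)]
    exact hA ‖x‖ (norm_nonneg x)

lemma integral_exp_neg_mul_rpow_norm_eq {d : ℕ} {b p : ℝ} (hb : 0 < b) (hp : 0 < p) :
    ∫ x : EuclideanSpace ℝ (Fin d), Real.exp (-(b * ‖x‖ ^ p)) =
      b ^ (-(d : ℝ) / p) * ∫ x : EuclideanSpace ℝ (Fin d), Real.exp (-(1 * ‖x‖ ^ p)) := by
  set E := EuclideanSpace ℝ (Fin d)
  set R : ℝ := b ^ (-p⁻¹) with hRdef
  have hR0 : 0 < R := Real.rpow_pos_of_pos hb _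
  have hRp : R ^ p = b⁻¹ := by
    rw [hRdef, ← Real.rpow_mul hb.le, neg_mul, inv_mul_cancel₀ hp.ne', Real.rpow_neg_one]
  have key : ∀ x : E, Real.exp (-(1 * ‖x‖ ^ p)) = Real.exp (-(b * ‖R • x‖ ^ p)) := by
    intro x
    congr 1
    rw [norm_smul, Real.norm_eq_abs, abs_of_pos hR0,
      Real.mul_rpow hR0.le (norm_nonneg x), hRp]
    field_simp
  have h2 := Measure.integral_comp_smul (volume : Measure E)
    (fun x : E => Real.exp (-(b * ‖x‖ ^ p))) R
  have h3 : ∫ x : E, Real.exp (-(1 * ‖x‖ ^ p)) =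
      |(R ^ Module.finrank ℝ E)⁻¹| • ∫ x : E, Real.exp (-(b * ‖x‖ ^ p)) := by
    rw [← h2]; exact integral_congr_ae (Filter.Eventually.of_forall fun x => key x)
  have hfr : Module.finrank ℝ E = d := finrank_euclideanSpace_fin
  have hRd : R ^ Module.finrank ℝ E = b ^ (-(d : ℝ) / p) := by
    rw [hfr, ← Real.rpow_natCast R d, hRdef, ← Real.rpow_mul hb.le]
    congr 1
    field_simp
  have hRdpos : 0 < R ^ Module.finrank ℝ E := pow_pos hR0 _
  rw [h3, abs_of_pos (inv_pos.mpr hRdpos), smul_eq_mul, ← mul_assoc, hRd]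
  rw [← hRd, mul_inv_cancel₀ hRdpos.ne', one_mul]

/-- Laplace-type estimate: for a weak external potential `v`, nonnegative and continuous on
the closed unit cube `Q`, vanishing exactly at interior points `y j` near which
`v(x) ~ c j ‖x - y j‖^{α j}`, there are `K > 0` and `C > 0` such that for every `t ≥ 1`,
`∫_Q exp (-t v) ≤ exp (-t K) + C ∑ j, t^{-d/α j}`. -/
theorem laplace_estimate_weak_potential
    (d : ℕ) (hd : 1 ≤ d)
    (Q : Set (EuclideanSpace ℝ (Fin d)))
    (hQ : Q = {x : EuclideanSpace ℝ (Fin d) | ∀ j, |x j| ≤ 1 / 2})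
    (v : EuclideanSpace ℝ (Fin d) → ℝ)
    (hv_cont : ContinuousOn v Q) (hv_nonneg : ∀ x ∈ Q, 0 ≤ v x)
    (n : ℕ) (hn : 1 ≤ n) (y : Fin n → EuclideanSpace ℝ (Fin d))
    (hy_distinct : Function.Injective y)
    (hy_interior : ∀ j, ∀ i, |y j i| < 1 / 2)
    (hzeros : ∀ x ∈ Q, (v x = 0 ↔ ∃ j, x = y j))
    (α c : Fin n → ℝ) (hα : ∀ j, 0 < α j) (hc : ∀ j, 0 < c j)
    (hlim : ∀ j, Tendsto (fun x => v x / ‖x - y j‖ ^ (α j))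
      (nhdsWithin (y j) {y j}ᶜ) (nhds (c j))) :
    ∃ K > (0 : ℝ), ∃ C > (0 : ℝ), ∀ t : ℝ, 1 ≤ t →
      ∫ z in Q, Real.exp (-(t * v z)) ≤
        Real.exp (-(t * K)) + C * ∑ j, t ^ (-(d : ℝ) / α j) := by
  classical
  -- Q is closed
  have hQclosed : IsClosed Q := by
    rw [hQ, Set.setOf_forall]
    exact isClosed_iInter fun j => isClosed_le
      (continuous_abs.comp (EuclideanSpace.proj (𝕜 := ℝ) j).continuous) continuous_const
  -- Q is compact
  have hQcomp : IsCompact Q := by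
    refine Metric.isCompact_of_isClosed_isBounded hQclosed ?_
    refine (Metric.isBounded_closedBall (x := (0 : EuclideanSpace ℝ (Fin d))) (r := (d : ℝ))).subset fun x hx => ?_
    rw [Metric.mem_closedBall, dist_zero_right]
    rw [hQ] at hx
    have hx' : ∀ j, |x j| ≤ 1 / 2 := hx
    rw [EuclideanSpace.norm_eq]
    have h1 : ∑ i, ‖x i‖ ^ 2 ≤ (d : ℝ) := by
      calc ∑ i, ‖x i‖ ^ 2 ≤ ∑ _i : Fin d, (1 : ℝ) := by
            refine Finset.sum_le_sum fun i _ => ?_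
            rw [Real.norm_eq_abs]
            have := hx' i
            nlinarith [abs_nonneg (x i)]
        _ = (d : ℝ) := by simp
    have h2 : (d : ℝ) ≤ (d : ℝ) ^ 2 := by
      have : (1 : ℝ) ≤ (d : ℝ) := by exact_mod_cast hd
      nlinarith
    calc Real.sqrt (∑ i, ‖x i‖ ^ 2) ≤ Real.sqrt ((d : ℝ) ^ 2) :=
          Real.sqrt_le_sqrt (h1.trans h2)
      _ = (d : ℝ) := Real.sqrt_sq (by positivity)
  have hQmeas : MeasurableSet Q := hQclosed.measurableSet
  -- volume of Q is 1
  have hQvol : (volume Q : ENNReal) = 1 := by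
    have hpre : Q = ((MeasurableEquiv.toLp 2 (Fin d → ℝ)).symm) ⁻¹'
        (Set.univ.pi fun _ : Fin d => Set.Icc (-(1/2) : ℝ) (1/2)) := by
      rw [hQ]
      ext x
      simp only [Set.mem_setOf_eq, Set.mem_preimage, Set.mem_pi, Set.mem_univ,
        true_implies, Set.mem_Icc, MeasurableEquiv.toLp_symm_apply]
      constructor
      · intro h j; have := abs_le.mp (h j); constructor <;> linarith [this.1, this.2]
      · intro h j; rw [abs_le]; constructor <;> linarith [(h j).1, (h j).2]
    rw [hpre, (EuclideanSpace.volume_preserving_symm_measurableEquiv_toLp (Fin d)).measure_preimage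
      ((MeasurableSet.univ_pi fun _ => measurableSet_Icc).nullMeasurableSet)]
    rw [volume_pi_pi]
    simp [Real.volume_Icc]
    norm_num
  -- y j ∈ Q and v (y j) = 0
  have hyQ : ∀ j, y j ∈ Q := by
    intro j; rw [hQ]; exact fun i => (hy_interior j i).le
  have hvy : ∀ j, v (y j) = 0 := fun j => (hzeros _ (hyQ j)).mpr ⟨j, rfl⟩
  -- choose the radii δ j
  have hδex : ∀ j, ∃ δ > (0:ℝ), ∀ x : EuclideanSpace ℝ (Fin d), ‖x - y j‖ < δ →
      c j / 2 * ‖x - y j‖ ^ (α j) ≤ v x := by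
    intro j
    have h := (Metric.tendsto_nhdsWithin_nhds).mp (hlim j) (c j / 2) (half_pos (hc j))
    obtain ⟨δ, hδ0, hδ⟩ := h
    refine ⟨δ, hδ0, fun x hx => ?_⟩
    rcases eq_or_ne x (y j) with rfl | hne
    · simp [hvy j, Real.zero_rpow (hα j).ne']
    · have h1 := hδ (Set.mem_compl_singleton_iff.mpr hne) (by rwa [dist_eq_norm])
      have hr : 0 < ‖x - y j‖ := by
        rw [norm_sub_pos_iff]; exact hne
      have hrα : 0 < ‖x - y j‖ ^ α j := Real.rpow_pos_of_pos hr _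
      rw [Real.dist_eq] at h1
      have h2 : c j / 2 ≤ v x / ‖x - y j‖ ^ α j := by
        have := abs_lt.mp h1; linarith [this.1]
      calc c j / 2 * ‖x - y j‖ ^ α j
          ≤ v x / ‖x - y j‖ ^ α j * ‖x - y j‖ ^ α j :=
            mul_le_mul_of_nonneg_right h2 hrα.le
        _ = v x := div_mul_cancel₀ _ hrα.ne'
  choose δ hδpos hδbound using hδex
  -- the union of balls
  set U : Set (EuclideanSpace ℝ (Fin d)) := ⋃ j, Metric.ball (y j) (δ j) with hUdef
  have hUopen : IsOpen U := isOpen_iUnion fun j => Metric.isOpen_ball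
  -- minimum of v outside the balls
  obtain ⟨ε, hε0, hεS⟩ : ∃ ε > (0:ℝ), ∀ x ∈ Q, x ∉ U → ε ≤ v x := by
    rcases Set.eq_empty_or_nonempty (Q \ U) with h | h
    · exact ⟨1, one_pos, fun x hx hxU =>
        absurd (show x ∈ Q \ U from ⟨hx, hxU⟩) (by simp [h])⟩
    · obtain ⟨x₀, hx₀S, hx₀min⟩ := (hQcomp.diff hUopen).exists_isMinOn h
        (hv_cont.mono Set.diff_subset)
      have hx₀Q : x₀ ∈ Q := hx₀S.1
      have hne : v x₀ ≠ 0 := by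
        intro h0
        obtain ⟨j, rfl⟩ := (hzeros x₀ hx₀Q).mp h0
        exact hx₀S.2 (Set.mem_iUnion.mpr ⟨j, Metric.mem_ball_self (hδpos j)⟩)
      exact ⟨v x₀, lt_of_le_of_ne (hv_nonneg _ hx₀Q) (Ne.symm hne),
        fun x hx hxU => hx₀min ⟨hx, hxU⟩⟩
  -- the comparison integrals
  set I : Fin n → ℝ := fun j => ∫ x : EuclideanSpace ℝ (Fin d), Real.exp (-(1 * ‖x‖ ^ α j)) with hIdef
  have hI0 : ∀ j, 0 ≤ I j := fun j => integral_nonneg fun x => (Real.exp_pos _).le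
  set Cj : Fin n → ℝ := fun j => (c j / 2) ^ (-(d : ℝ) / α j) * I j with hCjdef
  have hCj0 : ∀ j, 0 ≤ Cj j := fun j =>
    mul_nonneg (Real.rpow_nonneg (half_pos (hc j)).le _) (hI0 j)
  refine ⟨ε, hε0, 1 + ∑ j, Cj j, by
    have hs := Finset.sum_nonneg fun j (_ : j ∈ Finset.univ) => hCj0 j
    linarith, fun t ht => ?_⟩
  have ht0 : (0:ℝ) < t := lt_of_lt_of_le one_pos ht
  -- the dominating functions
  set g : Fin n → EuclideanSpace ℝ (Fin d) → ℝ := fun j z =>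
    Real.exp (-(t * (c j / 2) * ‖z - y j‖ ^ α j)) with hgdef
  have hg_int : ∀ j, Integrable (g j) := by
    intro j
    have h1 : Integrable (fun x : EuclideanSpace ℝ (Fin d) => Real.exp (-(t * (c j / 2) * ‖x‖ ^ α j))) := by
      have := integrable_exp_neg_mul_rpow_norm (d := d)
        (b := t * (c j / 2)) (p := α j) (mul_pos ht0 (half_pos (hc j))) (hα j)
      simpa [mul_assoc] using this
    have := h1.comp_sub_right (y j)
    simpa [hgdef] using this
  -- pointwise bound on Q
  have hpt : ∀ x ∈ Q, Real.exp (-(t * v x)) ≤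
      Real.exp (-(t * ε)) + ∑ j, g j x := by
    intro x hxQ
    by_cases hx : x ∈ U
    · obtain ⟨j, hj⟩ := Set.mem_iUnion.mp hx
      have hlt : ‖x - y j‖ < δ j := by
        rw [← dist_eq_norm]; exact Metric.mem_ball.mp hj
      have h1 : c j / 2 * ‖x - y j‖ ^ α j ≤ v x := hδbound j x hlt
      have h2 : Real.exp (-(t * v x)) ≤ g j x := by
        rw [hgdef]
        apply Real.exp_le_exp.mpr
        have : t * (c j / 2 * ‖x - y j‖ ^ α j) ≤ t * v x :=
          mul_le_mul_of_nonneg_left h1 ht0.le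
        simp only [neg_le_neg_iff]
        linarith [this]
      refine le_add_of_nonneg_of_le (Real.exp_pos _).le (h2.trans ?_)
      exact Finset.single_le_sum (f := fun i => g i x) (fun i _ => (Real.exp_pos _).le) (Finset.mem_univ j)
    · have h1 : ε ≤ v x := hεS x hxQ hx
      have h2 : Real.exp (-(t * v x)) ≤ Real.exp (-(t * ε)) := by
        apply Real.exp_le_exp.mpr
        simp only [neg_le_neg_iff]
        exact mul_le_mul_of_nonneg_left h1 ht0.le
      exact h2.trans (le_add_of_nonneg_right
        (Finset.sum_nonneg fun j _ => (Real.exp_pos _).le))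
  -- integrability on Q
  have hf_int : IntegrableOn (fun z => Real.exp (-(t * v z))) Q := by
    apply ContinuousOn.integrableOn_compact hQcomp
    exact ((hv_cont.const_smul t).neg).rexp
  have hsum_int : Integrable (fun z => ∑ j, g j z) :=
    integrable_finset_sum _ fun j _ => hg_int j
  have hh_int : IntegrableOn (fun z => Real.exp (-(t * ε)) + ∑ j, g j z) Q := by
    exact ((integrableOn_const_iff (C := Real.exp (-(t * ε)))).mpr (Or.inr (by rw [hQvol]; exact ENNReal.one_lt_top))).add hsum_int.integrableOn
  -- main chain
  have step1 : ∫ z in Q, Real.exp (-(t * v z)) ≤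
      ∫ z in Q, (Real.exp (-(t * ε)) + ∑ j, g j z) :=
    setIntegral_mono_on hf_int hh_int hQmeas hpt
  have step2 : ∫ z in Q, (Real.exp (-(t * ε)) + ∑ j, g j z) =
      Real.exp (-(t * ε)) + ∑ j, ∫ z in Q, g j z := by
    rw [integral_add ((integrableOn_const_iff (C := Real.exp (-(t * ε)))).mpr (Or.inr (by rw [hQvol]; exact ENNReal.one_lt_top)))
      hsum_int.integrableOn]
    rw [setIntegral_const, integral_finset_sum _ fun j _ => (hg_int j).integrableOn]
    rw [Measure.real, hQvol]
    simp
  have step3 : ∀ j, ∫ z in Q, g j z ≤ Cj j * t ^ (-(d : ℝ) / α j) := by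
    intro j
    have hb : (0:ℝ) < t * (c j / 2) := mul_pos ht0 (half_pos (hc j))
    have h1 : ∫ z in Q, g j z ≤ ∫ z, g j z :=
      setIntegral_le_integral (hg_int j)
        (Filter.Eventually.of_forall fun x => (Real.exp_pos _).le)
    have h2 : ∫ z, g j z = ∫ x : EuclideanSpace ℝ (Fin d), Real.exp (-(t * (c j / 2) * ‖x‖ ^ α j)) := by
      rw [hgdef]
      exact integral_sub_right_eq_self
        (fun x : EuclideanSpace ℝ (Fin d) => Real.exp (-(t * (c j / 2) * ‖x‖ ^ α j))) (y j)
    have h3 : ∫ x : EuclideanSpace ℝ (Fin d), Real.exp (-(t * (c j / 2) * ‖x‖ ^ α j)) =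
        (t * (c j / 2)) ^ (-(d : ℝ) / α j) * I j := by
      have := integral_exp_neg_mul_rpow_norm_eq (d := d)
        (b := t * (c j / 2)) (p := α j) hb (hα j)
      rw [hIdef]
      simpa [mul_assoc] using this
    have h4 : (t * (c j / 2)) ^ (-(d : ℝ) / α j) =
        t ^ (-(d : ℝ) / α j) * (c j / 2) ^ (-(d : ℝ) / α j) :=
      Real.mul_rpow ht0.le (half_pos (hc j)).le
    rw [h2, h3, h4] at h1
    calc ∫ z in Q, g j z ≤ t ^ (-(d : ℝ) / α j) * (c j / 2) ^ (-(d : ℝ) / α j) * I j := h1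
      _ = Cj j * t ^ (-(d : ℝ) / α j) := by rw [hCjdef]; ring
  have step4 : ∑ j, ∫ z in Q, g j z ≤ (1 + ∑ j, Cj j) * ∑ j, t ^ (-(d : ℝ) / α j) := by
    rw [Finset.mul_sum]
    refine Finset.sum_le_sum fun j _ => ?_
    refine (step3 j).trans ?_
    apply mul_le_mul_of_nonneg_right _ (Real.rpow_nonneg ht0.le _)
    calc Cj j ≤ ∑ k, Cj k :=
          Finset.single_le_sum (fun k _ => hCj0 k) (Finset.mem_univ j)
      _ ≤ 1 + ∑ k, Cj k := by linarith
  calc ∫ z in Q, Real.exp (-(t * v z))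
      ≤ Real.exp (-(t * ε)) + ∑ j, ∫ z in Q, g j z := by rw [← step2]; exact step1
    _ ≤ Real.exp (-(t * ε)) + (1 + ∑ j, Cj j) * ∑ j, t ^ (-(d : ℝ) / α j) := by
        linarith [step4]
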